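/- Let d be a squarefree positive integer with at least two prime factors. Then there are infinitely many positive integers n such that λ(n² + d) = −1. -/

import Mathlib

/-- The Liouville function: `λ(n) = (-1)^Ω(n)` where `Ω(n)` counts prime factors
of `n` with multiplicity. -/
def liouvilleFun (n : ℕ) : ℤ := (-1) ^ n.primeFactorsList.length

open ArithmeticFunction ArithmeticFunction.Omega in
private lemma liou_eq (n : ℕ) : liouvilleFun n = (-1) ^ (Ω n) := by
  rw [ArithmeticFunction.cardFactors_apply]; rfl

private lemma liou_mul {m n : ℕ} (hm : m ≠ 0) (hn : n ≠ 0) :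
    liouvilleFun (m * n) = liouvilleFun m * liouvilleFun n := by
  rw [liou_eq, liou_eq, liou_eq, ArithmeticFunction.cardFactors_mul hm hn, pow_add]

private lemma liou_prime {p : ℕ} (hp : p.Prime) : liouvilleFun p = -1 := by
  rw [liou_eq, ArithmeticFunction.cardFactors_apply_prime hp, pow_one]

private lemma liou_pm (n : ℕ) : liouvilleFun n = 1 ∨ liouvilleFun n = -1 := by
  rcases Nat.even_or_odd n.primeFactorsList.length with h | h
  · exact Or.inl (by simp [liouvilleFun, h.neg_one_pow])
  · exact Or.inr (by simp [liouvilleFun, h.neg_one_pow])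

private lemma liou_sq {m : ℕ} (hm : m ≠ 0) : liouvilleFun (m ^ 2) = 1 := by
  rw [sq, liou_mul hm hm]
  rcases liou_pm m with h | h <;> rw [h] <;> norm_num

private lemma bootstrap {d : ℕ} (hd : 0 < d)
    (h : ∃ n : ℕ, 0 < n ∧ liouvilleFun (n ^ 2 + d) = -1) :
    {n : ℕ | 0 < n ∧ liouvilleFun (n ^ 2 + d) = -1}.Infinite := by
  obtain ⟨n₀, hn₀, hl⟩ := h
  set t : ℕ := n₀ ^ 2 + d with ht
  have ht0 : 0 < t := by positivity
  have htns : ¬ IsSquare ((t : ℤ)) := by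
    rintro ⟨k, hk⟩
    have hk' : t = k.natAbs ^ 2 := by
      have : (t : ℤ) = (k.natAbs : ℤ) ^ 2 := by
        rw [hk, sq, Int.natAbs_mul_self']
      exact_mod_cast this
    have hkn0 : k.natAbs ≠ 0 := by
      rintro h0; rw [h0] at hk'; simp at hk'; omega
    rw [hk', liou_sq hkn0] at hl; norm_num at hl
  obtain ⟨a, hax, hay⟩ := Pell.Solution₁.exists_pos_of_not_isSquare
    (show (0:ℤ) < (t:ℤ) by exact_mod_cast ht0) htns
  have hprop := a.prop
  set u := a.x with hu
  set v := a.y with hv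
  let f : ℕ → ℤ × ℤ := fun k =>
    Nat.rec ((n₀ : ℤ), 1) (fun _ p => (u * p.1 + t * v * p.2, v * p.1 + u * p.2)) k
  have hf0 : f 0 = ((n₀ : ℤ), 1) := rfl
  have hfs : ∀ k, f (k+1) = (u * (f k).1 + t * v * (f k).2, v * (f k).1 + u * (f k).2) :=
    fun k => rfl
  have key : ∀ k, (0 < (f k).1 ∧ 0 < (f k).2) ∧ (f k).1 ^ 2 + d = t * (f k).2 ^ 2 := by
    intro k
    induction k with
    | zero =>
      rw [hf0]
      dsimp only
      refine ⟨⟨by exact_mod_cast hn₀, one_pos⟩, ?_⟩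
      push_cast [ht]; ring
    | succ k ih =>
      obtain ⟨⟨h1, h2⟩, h3⟩ := ih
      rw [hfs k]
      dsimp only
      constructor
      · constructor
        · have : (0:ℤ) < u * (f k).1 := mul_pos (by linarith) h1
          have h4 : (0:ℤ) < (t:ℤ) * v := mul_pos (by exact_mod_cast ht0) hay
          nlinarith
        · have : (0:ℤ) < v * (f k).1 := mul_pos hay h1
          nlinarith
      · have hx2 : u ^ 2 = 1 + t * v ^ 2 := by linarith [hprop]
        nlinarith [h3, hprop]
  have mono : ∀ k, (f k).1 < (f (k+1)).1 := by
    intro k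
    obtain ⟨⟨h1, h2⟩, _⟩ := key k
    rw [hfs k]
    dsimp only
    have h4 : (0:ℤ) < (t:ℤ) * v := mul_pos (by exact_mod_cast ht0) hay
    nlinarith
  have smono : StrictMono fun k => (f k).1 := strictMono_nat_of_lt_succ mono
  apply Set.infinite_of_injective_forall_mem
    (f := fun k : ℕ => ((f k).1).toNat)
  · intro i j hij
    have := smono.injective
    apply this
    have hi := (key i).1.1
    have hj := (key j).1.1
    simpa [Int.toNat_of_nonneg hi.le, Int.toNat_of_nonneg hj.le] using
      congrArg (fun m : ℕ => (m : ℤ)) hij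
  · intro k
    obtain ⟨⟨h1, h2⟩, h3⟩ := key k
    constructor
    · simpa using h1
    · have hxy : ((f k).1.toNat) ^ 2 + d = t * ((f k).2.toNat) ^ 2 := by
        have e1 : ((f k).1.toNat : ℤ) = (f k).1 := Int.toNat_of_nonneg h1.le
        have e2 : ((f k).2.toNat : ℤ) = (f k).2 := Int.toNat_of_nonneg h2.le
        have : (((f k).1.toNat ^ 2 + d : ℕ) : ℤ) = ((t * (f k).2.toNat ^ 2 : ℕ) : ℤ) := by
          push_cast [e1, e2]
          linarith [h3]
        exact_mod_cast this
      have hy0 : (f k).2.toNat ≠ 0 := by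
        have : (0:ℤ) < (f k).2 := h2
        omega
      rw [hxy, liou_mul ht0.ne' (pow_ne_zero 2 hy0), liou_sq hy0, hl]
      ring

private lemma brah (d X Y m j : ℕ) (h : (X:ℤ) - m*Y = j ∨ (X:ℤ) - m*Y = -(j:ℤ)) :
    (X^2 + d*Y^2) * (m^2 + d) = (X*m + d*Y)^2 + d*j^2 := by
  have : ((X:ℤ)^2 + d*Y^2) * (m^2 + d) = ((X:ℤ)*m + d*Y)^2 + d*((X:ℤ) - m*Y)^2 := by ring
  rcases h with h | h <;>
  · rw [h] at this
    exact_mod_cast (by linarith [this] :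
      ((X:ℤ)^2 + d*Y^2) * (m^2 + d) = ((X:ℤ)*m + d*Y)^2 + d*(j:ℤ)^2)

private lemma famC1 {d : ℕ} (hd : 0 < d)
    (base : ∀ n : ℕ, 0 < n → liouvilleFun (n ^ 2 + d) = 1) :
    ∀ Y : ℕ, 0 < Y → ∀ X : ℕ, 0 < X → liouvilleFun (X ^ 2 + d * Y ^ 2) = 1 := by
  intro Y
  induction Y using Nat.strong_induction_on with
  | _ Y IH =>
  intro hY X hX
  rcases eq_or_lt_of_le (Nat.one_le_iff_ne_zero.mpr hY.ne') with h1 | hY2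
  · rw [← h1]
    simpa using base X hX
  by_cases hXY : Y ≤ X
  · set m := X / Y with hm
    set j := X % Y with hj
    have hm1 : 0 < m := Nat.one_le_div_iff hY |>.mpr hXY
    have hjY : j < Y := Nat.mod_lt _ hY
    have hnat : Y * m + j = X := Nat.div_add_mod X Y
    have hdiv : (X:ℤ) - m * Y = j := by
      push_cast [← hnat]
      ring
    rcases Nat.eq_zero_or_pos j with hj0 | hjpos
    · have hXm : X = Y * m := by omega
      have : X ^ 2 + d * Y ^ 2 = Y ^ 2 * (m ^ 2 + d) := by rw [hXm]; ring
      rw [this, liou_mul (pow_ne_zero 2 hY.ne') (by positivity), liou_sq hY.ne']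
      rw [one_mul]
      exact base m hm1
    · have hid := brah d X Y m j (Or.inl hdiv)
      have hA : X ^ 2 + d * Y ^ 2 ≠ 0 := by positivity
      have hB : m ^ 2 + d ≠ 0 := by positivity
      have hXmdY : 0 < X * m + d * Y := by positivity
      have hR : liouvilleFun ((X*m + d*Y)^2 + d*j^2) = 1 := IH j hjY hjpos _ hXmdY
      have := liou_mul hA hB
      rw [hid, hR, base m hm1, mul_one] at this
      exact this.symm
  · push_neg at hXY
    set j := Y - X with hj
    have hjY : j < Y := by omega
    have hdiv : (X:ℤ) - 1 * Y = -(j:ℤ) := by push_cast [hj]; omega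
    have hid := brah d X Y 1 j (Or.inr hdiv)
    rcases Nat.eq_zero_or_pos j with hj0 | hjpos
    · omega
    · have hA : X ^ 2 + d * Y ^ 2 ≠ 0 := by positivity
      have hB : 1 ^ 2 + d ≠ 0 := by positivity
      have hXmdY : 0 < X * 1 + d * Y := by positivity
      have hR : liouvilleFun ((X*1 + d*Y)^2 + d*j^2) = 1 := IH j hjY hjpos _ hXmdY
      have hBase1 : liouvilleFun (1 ^ 2 + d) = 1 := base 1 one_pos
      have := liou_mul hA hB
      rw [hid, hR, hBase1, mul_one] at this
      exact this.symm

private lemma isSquare_prime_of_modeq {p r : ℕ} (hp : p.Prime) (hr : r.Prime)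
    (h : r % (4 * p) = 1) : IsSquare ((p : ZMod r)) := by
  haveI : Fact r.Prime := ⟨hr⟩
  have hppos := hp.pos
  have hp1 := hp.one_lt
  have h4 : r % 4 = 1 := by
    rw [← Nat.mod_mod_of_dvd r (dvd_mul_right 4 p), h]
  have hpr : r % p = 1 := by
    rw [← Nat.mod_mod_of_dvd r (dvd_mul_left p 4), h, Nat.mod_eq_of_lt hp1]
  have hdvd : 4 * p ∣ r - 1 := by
    refine (Nat.modEq_iff_dvd' hr.pos).mp ?_
    show 1 % (4 * p) = r % (4 * p)
    rw [h, Nat.mod_eq_of_lt (by omega)]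
  have hrp : p < r := by
    have h1 : 4 * p ≤ r - 1 := Nat.le_of_dvd (by have := hr.one_lt; omega) hdvd
    omega
  have hp0 : (p : ZMod r) ≠ 0 := by
    rw [Ne, ZMod.natCast_eq_zero_iff]
    intro hdvd2
    have := Nat.le_of_dvd hp.pos hdvd2
    omega
  by_cases hp2 : p = 2
  · subst hp2
    rw [show ((2 : ℕ) : ZMod r) = (2 : ZMod r) by push_cast; ring]
    rw [ZMod.exists_sq_eq_two_iff (by omega : r ≠ 2)]
    left
    rw [← Nat.mod_mod_of_dvd r (by norm_num : 8 ∣ 4 * 2), h, Nat.mod_eq_of_lt (by norm_num)]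
  · haveI : Fact p.Prime := ⟨hp⟩
    have key : legendreSym r p = 1 := by
      rw [← legendreSym.quadratic_reciprocity_one_mod_four h4 hp2]
      rw [legendreSym.mod]
      have hd : ((p:ℤ)) ∣ ((r:ℤ) - 1) := by
        have h2 : (p:ℕ) ∣ r - 1 := dvd_trans (dvd_mul_left p 4) hdvd
        zify at h2
        rwa [Nat.cast_sub hr.pos] at h2
      obtain ⟨k, hk⟩ := hd
      have hrk : (r:ℤ) = 1 + p * k := by linarith
      have hmod : (r:ℤ) % (p:ℤ) = 1 := by
        rw [hrk, Int.add_mul_emod_self_left]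
        exact Int.emod_eq_of_lt (by norm_num) (by exact_mod_cast hp1)
      rw [hmod, legendreSym.at_one]
    have := (legendreSym.eq_one_iff r (by exact_mod_cast hp0)).mp key
    simpa using this

private lemma isSquare_nat_of_modeq {r : ℕ} (hr : r.Prime) :
    ∀ d : ℕ, 0 < d → r % (4 * d) = 1 → IsSquare ((d : ZMod r)) := by
  intro d
  induction d using Nat.strong_induction_on with
  | _ d IH =>
  intro hd h
  rcases eq_or_lt_of_le (Nat.one_le_iff_ne_zero.mpr hd.ne') with h1 | h2
  · rw [← h1]; exact (IsSquare.one (α := ℕ)).map (Nat.castRingHom (ZMod r))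
  · set p := d.minFac with hp
    have hpp : p.Prime := Nat.minFac_prime h2.ne'
    have hpd : p ∣ d := Nat.minFac_dvd d
    obtain ⟨e, he⟩ := hpd
    have he0 : 0 < e := by
      rcases Nat.eq_zero_or_pos e with h0 | h0
      · rw [h0, mul_zero] at he; omega
      · exact h0
    have hed : e < d := by
      have := hpp.one_lt
      calc e = 1 * e := (one_mul e).symm
      _ < p * e := by exact (Nat.mul_lt_mul_right he0).mpr this
      _ = d := he.symm
    have hmodp : r % (4 * p) = 1 := by
      rw [← Nat.mod_mod_of_dvd r
        (by exact Nat.mul_dvd_mul_left 4 ⟨e, he⟩ : 4 * p ∣ 4 * d), h,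
        Nat.mod_eq_of_lt (by have := hpp.one_lt; omega)]
    have hmode : r % (4 * e) = 1 := by
      rw [← Nat.mod_mod_of_dvd r
        (by exact Nat.mul_dvd_mul_left 4 ⟨p, by rw [he]; ring⟩ : 4 * e ∣ 4 * d), h,
        Nat.mod_eq_of_lt (by omega)]
    have h1 := isSquare_prime_of_modeq hpp hr hmodp
    have h2' := IH e hed he0 hmode
    have := h1.mul h2'
    rw [he]
    push_cast
    exact this

private lemma isSquare_neg_d {d r : ℕ} (hr : r.Prime) (hd : 0 < d) (h : r % (4 * d) = 1) :
    IsSquare (-(d : ZMod r)) := by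
  haveI : Fact r.Prime := ⟨hr⟩
  have h4 : r % 4 = 1 := by
    rw [← Nat.mod_mod_of_dvd r (dvd_mul_right 4 d), h]
  have h1 : IsSquare (-1 : ZMod r) := by
    rw [ZMod.exists_sq_eq_neg_one_iff]; omega
  have h2 := isSquare_nat_of_modeq hr d hd h
  simpa using h1.mul h2

private lemma pigeon {d r : ℕ} (hr : 0 < r) (hd : 0 < d) (c : ℕ) :
    ∃ ξ η ζ : ℤ, ¬(ξ = 0 ∧ η = 0 ∧ ζ = 0) ∧
      ((r:ℤ) ∣ ξ - c * η) ∧ ((d:ℤ) ∣ ξ - ζ) ∧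
      ξ.natAbs ≤ Nat.sqrt (r*d) ∧ η.natAbs ≤ Nat.sqrt r ∧ ζ.natAbs ≤ Nat.sqrt d := by
  haveI : NeZero r := ⟨hr.ne'⟩
  haveI : NeZero d := ⟨hd.ne'⟩
  set A := Nat.sqrt (r*d) with hA
  set B := Nat.sqrt r with hB
  set C := Nat.sqrt d with hC
  set s : Finset (ℕ × ℕ × ℕ) :=
    (Finset.range (A+1)) ×ˢ (Finset.range (B+1)) ×ˢ (Finset.range (C+1)) with hs
  have hcard : (Finset.univ : Finset (ZMod r × ZMod d)).card < s.card := by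
    have e1 : (Finset.univ : Finset (ZMod r × ZMod d)).card = r * d := by
      simp [Finset.card_univ]
    have e2 : s.card = (A+1) * ((B+1) * (C+1)) := by
      simp [hs, Finset.card_product]
    rw [e1, e2]
    have k1 : r * d < (A+1) * (A+1) := Nat.lt_succ_sqrt (r*d)
    have k2 : r < (B+1) * (B+1) := Nat.lt_succ_sqrt r
    have k3 : d < (C+1) * (C+1) := Nat.lt_succ_sqrt d
    by_contra hcon
    push_neg at hcon
    have h2 : ((A+1) * ((B+1) * (C+1))) * ((A+1) * ((B+1) * (C+1))) ≤ (r*d) * (r*d) :=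
      Nat.mul_le_mul hcon hcon
    have h3 : (r*d) * (r * d) < ((A+1)*(A+1)) * (((B+1)*(B+1)) * ((C+1)*(C+1))) := by
      calc (r*d) * (r*d) < ((A+1)*(A+1)) * (r * d) := by
            exact Nat.mul_lt_mul_of_lt_of_le k1 (le_refl _) (by positivity)
      _ ≤ ((A+1)*(A+1)) * (((B+1)*(B+1)) * ((C+1)*(C+1))) := by
            refine Nat.mul_le_mul (le_refl _) ?_
            exact Nat.mul_le_mul k2.le k3.le
    nlinarith [h2, h3]
  have hmaps : ∀ a ∈ s, (fun t : ℕ × ℕ × ℕ =>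
      (((((t.1:ℤ) - c * t.2.1 : ℤ)) : ZMod r), ((((t.1:ℤ) - t.2.2 : ℤ)) : ZMod d))) a
      ∈ (Finset.univ : Finset (ZMod r × ZMod d)) := by
    intro a _; exact Finset.mem_univ _
  obtain ⟨x, hxs, y, hys, hxy, hfeq⟩ :=
    Finset.exists_ne_map_eq_of_card_lt_of_maps_to hcard hmaps
  simp only [hs, Finset.mem_product, Finset.mem_range] at hxs hys
  obtain ⟨hx1, hx2, hx3⟩ := hxs
  obtain ⟨hy1, hy2, hy3⟩ := hys
  have hfeq1 := congrArg Prod.fst hfeq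
  have hfeq2 := congrArg Prod.snd hfeq
  simp only at hfeq1 hfeq2
  refine ⟨(x.1:ℤ) - y.1, (x.2.1:ℤ) - y.2.1, (x.2.2:ℤ) - y.2.2, ?_, ?_, ?_, ?_, ?_, ?_⟩
  · rintro ⟨e1, e2, e3⟩
    apply hxy
    have : x.1 = y.1 := by omega
    have : x.2.1 = y.2.1 := by omega
    have : x.2.2 = y.2.2 := by omega
    ext <;> omega
  · have := (ZMod.intCast_eq_intCast_iff _ _ _).mp hfeq1
    have hdvd := Int.ModEq.dvd this
    have : ((x.1:ℤ) - y.1) - c * ((x.2.1:ℤ) - y.2.1)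
        = ((x.1:ℤ) - c * x.2.1) - ((y.1:ℤ) - c * y.2.1) := by ring
    rw [this]
    exact (dvd_sub_comm.mp hdvd)
  · have := (ZMod.intCast_eq_intCast_iff _ _ _).mp hfeq2
    have hdvd := Int.ModEq.dvd this
    have : ((x.1:ℤ) - y.1) - ((x.2.2:ℤ) - y.2.2)
        = ((x.1:ℤ) - x.2.2) - ((y.1:ℤ) - y.2.2) := by ring
    rw [this]
    exact (dvd_sub_comm.mp hdvd)
  · omega
  · omega
  · omega

private lemma vr_parity {r a y z : ℕ} (hr : r.Prime) (hra : ¬ r ∣ a) (ha : a ≠ 0)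
    (hy : y ≠ 0) (hz : z ≠ 0) (h : a * y^2 = r * z^2) : False := by
  have h1 : (a * y^2).factorization r = (r * z^2).factorization r := by rw [h]
  rw [Nat.factorization_mul ha (pow_ne_zero 2 hy),
    Nat.factorization_mul hr.ne_zero (pow_ne_zero 2 hz),
    Nat.factorization_pow, Nat.factorization_pow] at h1
  simp only [Finsupp.add_apply, Finsupp.smul_apply, smul_eq_mul] at h1
  rw [Nat.factorization_eq_zero_of_not_dvd hra, hr.factorization] at h1
  simp at h1
  omega

private lemma vr_parity1 {r w x : ℕ} (hr : r.Prime) (hrw : ¬ r ∣ w) (hw : w ≠ 0)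
    (hx : x ≠ 0) (h : x^2 = r * w) : False := by
  have h1 : (x^2).factorization r = (r * w).factorization r := by rw [h]
  rw [Nat.factorization_pow, Nat.factorization_mul hr.ne_zero hw] at h1
  simp only [Finsupp.add_apply, Finsupp.smul_apply, smul_eq_mul] at h1
  rw [Nat.factorization_eq_zero_of_not_dvd hrw, hr.factorization] at h1
  simp at h1

set_option maxHeartbeats 2000000 in
private lemma main_contradiction {d r c : ℕ} (hd2 : 1 < d) (hsf : Squarefree d)
    (hr : r.Prime) (hrd : 4*d < r) (hdr1 : (d:ℤ) ∣ (r:ℤ) - 1)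
    (hc : (r:ℤ) ∣ ((c:ℤ)^2 + d))
    (A1 : ∀ n : ℕ, 0 < n → liouvilleFun (n^2 + d) = 1)
    (famC1arg : ∀ Y : ℕ, 0 < Y → ∀ X : ℕ, 0 < X → liouvilleFun (X^2 + d*Y^2) = 1)
    (D1 : liouvilleFun d = 1)
    (D2 : ∀ m : ℕ, 0 < m → liouvilleFun (d*m^2+1) = 1) : False := by
  have hd0 : 0 < d := by omega
  have hr0 : 0 < r := hr.pos
  have hrnd : ¬ r ∣ d := fun hdvd => by have := Nat.le_of_dvd hd0 hdvd; omega
  obtain ⟨ξ, η, ζ, hnz, h1, h2, hxA, hyB, hzC⟩ := pigeon hr0 hd0 c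
  set x := ξ.natAbs with hx
  set y := η.natAbs with hy
  set z := ζ.natAbs with hz
  set q : ℤ := ξ^2 + d*η^2 - r*ζ^2 with hq
  -- divisibility by r
  have hqr : (r:ℤ) ∣ q := by
    have e : q = (ξ - c*η)*(ξ + c*η) + ((c:ℤ)^2 + d)*η^2 - r*ζ^2 := by rw [hq]; ring
    rw [e]
    exact dvd_sub (dvd_add (h1.mul_right _) (hc.mul_right _)) (Dvd.intro _ rfl)
  -- divisibility by d
  have hqd : (d:ℤ) ∣ q := by
    have e : q = (ξ - ζ)*(ξ + ζ) - ((r:ℤ) - 1)*ζ^2 + d*η^2 := by rw [hq]; ring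
    rw [e]
    exact dvd_add (dvd_sub (h2.mul_right _) (hdr1.mul_right _)) (Dvd.intro _ rfl)
  have hcop : IsCoprime (r:ℤ) (d:ℤ) := by
    rw [Int.isCoprime_iff_gcd_eq_one]
    have := (Nat.Prime.coprime_iff_not_dvd hr).mpr hrnd
    simpa [Int.gcd] using this
  have hqrd : ((r:ℤ)*d) ∣ q := hcop.mul_dvd hqr hqd
  -- bounds
  have hsq : ∀ w : ℤ, w^2 = ((w.natAbs^2 : ℕ) : ℤ) := by
    intro w; rw [← Int.natAbs_pow_two w]; push_cast; ring
  have hA2 : x^2 ≤ r*d := by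
    calc x^2 = x*x := sq x
    _ ≤ Nat.sqrt (r*d) * Nat.sqrt (r*d) := Nat.mul_le_mul hxA hxA
    _ ≤ r*d := Nat.sqrt_le (r*d)
  have hB2 : y^2 < r := by
    have hbb : Nat.sqrt r * Nat.sqrt r < r := by
      rcases eq_or_lt_of_le (Nat.sqrt_le r) with he | hlt
      · exfalso
        have hdd : Nat.sqrt r ∣ r := ⟨Nat.sqrt r, he.symm⟩
        rcases (Nat.Prime.eq_one_or_self_of_dvd hr _ hdd) with h | h
        · rw [h] at he; simp at he; omega
        · rw [h] at he; nlinarith [hr.one_lt]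
      · exact hlt
    calc y^2 = y*y := sq y
    _ ≤ Nat.sqrt r * Nat.sqrt r := Nat.mul_le_mul hyB hyB
    _ < r := hbb
  have hC2 : z^2 < d := by
    have hcc : Nat.sqrt d * Nat.sqrt d < d := by
      rcases eq_or_lt_of_le (Nat.sqrt_le d) with he | hlt
      · exfalso
        have : IsUnit (Nat.sqrt d) := hsf _ ⟨1, by rw [Nat.mul_one, he]⟩
        rw [Nat.isUnit_iff] at this
        rw [this] at he; omega
      · exact hlt
    calc z^2 = z*z := sq z
    _ ≤ Nat.sqrt d * Nat.sqrt d := Nat.mul_le_mul hzC hzC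
    _ < d := hcc
  -- q = 0 or q = r*d
  have hq01 : q = 0 ∨ q = (r:ℤ)*d := by
    obtain ⟨k, hk⟩ := hqrd
    have hub : q < 2*((r:ℤ)*d) := by
      have : q ≤ ξ^2 + d*η^2 := by
        have : (0:ℤ) ≤ r*ζ^2 := by positivity
        omega
      calc q ≤ ξ^2 + d*η^2 := this
      _ = ((x^2 : ℕ):ℤ) + d*((y^2:ℕ):ℤ) := by rw [hsq ξ, hsq η]
      _ < 2*((r:ℤ)*d) := by
          have b1 : ((x^2:ℕ):ℤ) ≤ ((r*d : ℕ):ℤ) := by exact_mod_cast hA2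
          have b2 : ((y^2:ℕ):ℤ) ≤ ((r - 1 : ℕ):ℤ) := by exact_mod_cast (by omega : y^2 ≤ r - 1)
          have : ((r-1:ℕ):ℤ) = (r:ℤ) - 1 := by omega
          rw [this] at b2
          have hd0' : (0:ℤ) < d := by exact_mod_cast hd0
          push_cast at b1 ⊢
          nlinarith
    have hlb : -((r:ℤ)*d) < q := by
      have : q ≥ -(r*ζ^2) := by
        have hx2 : (0:ℤ) ≤ ξ^2 := sq_nonneg _
        have hy2 : (0:ℤ) ≤ d*η^2 := by positivity
        omega
      have e : (r:ℤ)*ζ^2 = (r:ℤ)*((z^2:ℕ):ℤ) := by rw [hsq ζ]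
      have b3 : ((z^2:ℕ):ℤ) ≤ ((d - 1:ℕ):ℤ) := by exact_mod_cast (by omega : z^2 ≤ d - 1)
      have h4 : ((d-1:ℕ):ℤ) = (d:ℤ) - 1 := by omega
      rw [h4] at b3
      have hr0' : (0:ℤ) < r := by exact_mod_cast hr0
      nlinarith
    rw [hk] at hub hlb ⊢
    have hM : (0:ℤ) < (r:ℤ)*d := by positivity
    rcases lt_trichotomy k 0 with hk0 | hk0 | hk0
    · exfalso
      have h5 : (r:ℤ)*d*k ≤ (r:ℤ)*d*(-1) := mul_le_mul_of_nonneg_left (by omega) hM.le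
      linarith
    · left; rw [hk0]; ring
    · rcases eq_or_lt_of_le (by omega : (1:ℤ) ≤ k) with hk1 | hk1
      · right; rw [← hk1]; ring
      · exfalso
        have h5 : (r:ℤ)*d*2 ≤ (r:ℤ)*d*k := mul_le_mul_of_nonneg_left (by omega) hM.le
        linarith
  -- translate to ℕ
  have hnz' : ¬(x = 0 ∧ y = 0 ∧ z = 0) := by
    intro ⟨e1, e2, e3⟩
    exact hnz ⟨Int.natAbs_eq_zero.mp e1, Int.natAbs_eq_zero.mp e2, Int.natAbs_eq_zero.mp e3⟩
  have hliou_rmul : ∀ w : ℕ, w ≠ 0 → liouvilleFun (r * w) = - liouvilleFun w := by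
    intro w hw
    rw [liou_mul hr0.ne' hw, liou_prime hr]
    ring
  have hcase0 := hq01
  have ex : ((x:ℤ))^2 = ξ^2 := by rw [hx, sq, sq, Int.natAbs_mul_self']
  have ey : ((y:ℤ))^2 = η^2 := by rw [hy, sq, sq, Int.natAbs_mul_self']
  have ez : ((z:ℤ))^2 = ζ^2 := by rw [hz, sq, sq, Int.natAbs_mul_self']
  rw [hq] at hcase0
  rcases hcase0 with hcase | hcase
  · -- x² + d y² = r z²
    have hnat : x^2 + d*y^2 = r*z^2 := by
      have : ((x^2 + d*y^2 : ℕ):ℤ) = ((r*z^2 : ℕ):ℤ) := by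
        push_cast
        rw [ex, ey, ez]
        linarith [hcase]
      exact_mod_cast this
    rcases Nat.eq_zero_or_pos z with hz0 | hz0
    · rw [hz0] at hnat
      have h0 : x^2 + d*y^2 = 0 := by simpa using hnat
      have hx0 : x = 0 ∧ (d = 0 ∨ y = 0) := by
        constructor
        · have := Nat.eq_zero_of_add_eq_zero_right h0
          exact pow_eq_zero_iff two_ne_zero |>.mp this
        · have := Nat.eq_zero_of_add_eq_zero_left h0
          rcases Nat.mul_eq_zero.mp this with h | h
          · exact Or.inl h
          · exact Or.inr (pow_eq_zero_iff two_ne_zero |>.mp h)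
      exact hnz' ⟨hx0.1, by omega, hz0⟩
    rcases Nat.eq_zero_or_pos x with hx0 | hx0 <;> rcases Nat.eq_zero_or_pos y with hy0 | hy0
    · rw [hx0, hy0] at hnat
      have hpos : 0 < r * z^2 := Nat.mul_pos hr0 (by positivity)
      simp at hnat
      omega
    · -- x = 0, y > 0 : d y² = r z²
      rw [hx0] at hnat
      simp at hnat
      exact vr_parity hr hrnd hd0.ne' hy0.ne' hz0.ne' hnat
    · -- y = 0 : x² = r z²
      rw [hy0] at hnat
      simp at hnat
      exact vr_parity hr (by simp [Nat.Prime.one_lt hr]; omega : ¬ r ∣ 1) one_ne_zero hx0.ne' hz0.ne'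
        (by rw [one_mul]; exact hnat)
    · -- x,y > 0
      have e1 : liouvilleFun (x^2 + d*y^2) = 1 := famC1arg y hy0 x hx0
      rw [hnat, hliou_rmul _ (pow_ne_zero 2 hz0.ne'), liou_sq hz0.ne'] at e1
      norm_num at e1
  · -- x² + d y² = r (z² + d)
    have hnat : x^2 + d*y^2 = r*(z^2 + d) := by
      have : ((x^2 + d*y^2 : ℕ):ℤ) = ((r*(z^2+d) : ℕ):ℤ) := by
        push_cast
        rw [ex, ey, ez]
        linarith [hcase]
      exact_mod_cast this
    have hz2d : z^2 + d ≠ 0 := by positivity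
    rcases Nat.eq_zero_or_pos x with hx0 | hx0 <;> rcases Nat.eq_zero_or_pos y with hy0 | hy0
    · rw [hx0, hy0] at hnat
      have hpos : 0 < r * (z^2 + d) := Nat.mul_pos hr0 (by positivity)
      simp at hnat
      omega
    · -- x = 0, y > 0 : d y² = r(z²+d)
      rw [hx0] at hnat
      rw [pow_two, Nat.zero_mul, Nat.zero_add] at hnat
      have hco : Nat.Coprime d r := ((Nat.Prime.coprime_iff_not_dvd hr).mpr hrnd).symm
      have hdrz : d ∣ r * z^2 := by
        have ha : d ∣ r*(z^2 + d) := by rw [← hnat]; exact dvd_mul_right d _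
        have hb := Nat.dvd_sub ha (dvd_mul_left d r)
        have he : r*(z^2+d) - r*d = r*z^2 := by rw [Nat.mul_add]; omega
        rwa [he] at hb
      have hdz2 : d ∣ z^2 := hco.dvd_of_dvd_mul_left hdrz
      have hdz : d ∣ z := (hsf.dvd_pow_iff_dvd two_ne_zero).mp hdz2
      obtain ⟨z₁, hz1⟩ := hdz
      have y2eq : y^2 = r*(d*z₁^2+1) := by
        have hcc : d * y^2 = d * (r*(d*z₁^2+1)) := by rw [hnat, hz1]; ring
        exact Nat.eq_of_mul_eq_mul_left hd0 hcc
      rcases Nat.eq_zero_or_pos z₁ with hz10 | hz10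
      · rw [hz10] at y2eq
        simp at y2eq
        exact vr_parity1 hr (fun hh => by have := Nat.le_of_dvd one_pos hh; have := hr.one_lt; omega)
          one_ne_zero hy0.ne' (by simpa using y2eq)
      · have e1 : liouvilleFun (y^2) = 1 := liou_sq hy0.ne'
        rw [y2eq, hliou_rmul _ (by positivity), D2 z₁ hz10] at e1
        norm_num at e1
    · -- y = 0, x > 0 : x² = r(z²+d)
      rw [hy0] at hnat
      rw [pow_two 0, Nat.mul_zero, Nat.mul_zero, Nat.add_zero] at hnat
      rcases Nat.eq_zero_or_pos z with hz0 | hz0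
      · rw [hz0] at hnat
        rw [pow_two 0, Nat.zero_mul, Nat.zero_add] at hnat
        exact vr_parity1 hr hrnd hd0.ne' hx0.ne' hnat
      · have e1 : liouvilleFun (x^2) = 1 := liou_sq hx0.ne'
        rw [hnat, hliou_rmul _ hz2d, A1 z hz0] at e1
        norm_num at e1
    · -- x, y > 0
      have e1 : liouvilleFun (x^2 + d*y^2) = 1 := famC1arg y hy0 x hx0
      rcases Nat.eq_zero_or_pos z with hz0 | hz0
      · rw [hz0] at hnat
        rw [pow_two 0, Nat.zero_mul, Nat.zero_add] at hnat
        rw [hnat, liou_mul hr0.ne' hd0.ne', liou_prime hr, D1] at e1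
        norm_num at e1
      · rw [hnat, hliou_rmul _ hz2d, A1 z hz0] at e1
        norm_num at e1


theorem liouville_neg_infinitely_often_sq_add (d : ℕ) (hd : 0 < d)
    (hsf : Squarefree d) (hpf : 2 ≤ d.primeFactors.card) :
    {n : ℕ | 0 < n ∧ liouvilleFun (n ^ 2 + d) = -1}.Infinite := by
  have hd2 : 1 < d := by
    by_contra hcon
    have : d = 1 := by omega
    subst this
    simp [Nat.primeFactors_one] at hpf
  by_contra hinf
  have A1 : ∀ n : ℕ, 0 < n → liouvilleFun (n^2 + d) = 1 := by
    intro n hn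
    rcases liou_pm (n^2+d) with h | h
    · exact h
    · exact absurd (bootstrap hd ⟨n, hn, h⟩) hinf
  have D1 : liouvilleFun d = 1 := by
    have h1 : liouvilleFun (d^2 + d) = 1 := A1 d (by omega)
    have e : d^2 + d = d * (d+1) := by ring
    rw [e, liou_mul (by omega) (by omega)] at h1
    have h2 : liouvilleFun (1^2 + d) = 1 := A1 1 one_pos
    have e2 : 1^2 + d = d + 1 := by ring
    rw [e2] at h2
    rw [h2, mul_one] at h1
    exact h1
  have D2 : ∀ m : ℕ, 0 < m → liouvilleFun (d*m^2 + 1) = 1 := by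
    intro m hm
    have h1 : liouvilleFun ((d*m)^2 + d) = 1 := A1 (d*m) (by positivity)
    have e : (d*m)^2 + d = d * (d*m^2 + 1) := by ring
    rw [e, liou_mul (by omega) (by positivity), D1, one_mul] at h1
    exact h1
  have C1 := famC1 hd A1
  obtain ⟨r, hrp, hrgt, hrmod⟩ := Nat.exists_prime_gt_modEq_one (k := 4*d) (4*d) (by omega)
  have hmod1 : r % (4*d) = 1 := by
    have : r % (4*d) = 1 % (4*d) := hrmod
    rw [this, Nat.mod_eq_of_lt (by omega)]
  have hdvdn : 4*d ∣ r - 1 := by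
    refine (Nat.modEq_iff_dvd' (by omega : 1 ≤ r)).mp hrmod.symm
  have hdr1 : (d:ℤ) ∣ (r:ℤ) - 1 := by
    obtain ⟨k, hk⟩ := hdvdn
    have hk' : ((r:ℤ) - 1) = 4*(d:ℤ)*(k:ℤ) := by
      have h1 : (1:ℕ) ≤ r := by omega
      have := congrArg (fun m : ℕ => (m:ℤ)) hk
      push_cast at this
      omega
    rw [hk']
    exact ⟨4*k, by ring⟩
  haveI : Fact r.Prime := ⟨hrp⟩
  haveI : NeZero r := ⟨hrp.pos.ne'⟩
  obtain ⟨s, hs⟩ := isSquare_neg_d hrp (by omega : 0 < d) hmod1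
  set c : ℕ := s.val with hcdef
  have hval : ((c : ℕ) : ZMod r) = s := ZMod.natCast_rightInverse s
  have hc : (r:ℤ) ∣ ((c:ℤ)^2 + d) := by
    have : (((c:ℤ)^2 + d : ℤ) : ZMod r) = 0 := by
      push_cast
      rw [hval, sq, ← hs]
      ring
    exact (ZMod.intCast_zmod_eq_zero_iff_dvd _ r).mp this
  exact main_contradiction hd2 hsf hrp (by omega) hdr1 hc A1 C1 D1 D2
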